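/- Let Y be a real random variable with a continuous Lebesgue density p_Y satisfying 0 < p_Y(y) ≤ D < ∞ for all y ∈ ℝ, and let (X_n)_{n≥1} be real random variables with Lebesgue densities (p_n)_{n≥1}. If ‖p_n − p_Y‖_2 → 0 as n → ∞ and there exists s > 1 such that sup_n E|ln p_Y(X_n)|^s < ∞, then KL(X_n‖Y) → 0 as n → ∞. -/

import Mathlib

open MeasureTheory Real Filter
open scoped ENNReal

noncomputable section

/-- `p` is the Lebesgue density of the real random variable `X` defined on `(Ω, P)`. -/
def IsDensityOf {Ω : Type*} [MeasurableSpace Ω] (P : Measure Ω) (X : Ω → ℝ) (p : ℝ → ℝ) : Prop :=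
  Measurable X ∧ Measurable p ∧ (∀ x, 0 ≤ p x) ∧
    Measure.map X P = volume.withDensity (fun x => ENNReal.ofReal (p x))

/-- Kullback–Leibler divergence between densities:  `∫ p_X ln (p_X / p_Y)`. -/
def KLdiv (pX pY : ℝ → ℝ) : ℝ := ∫ x, pX x * Real.log (pX x / pY x)

lemma kl_pt_eq (x y : ℝ) (hy : y ≠ 0) :
    x * Real.log (x / y) = (x * Real.log x - x * Real.log y - x + y) + (x - y) := by
  rcases eq_or_ne x 0 with rfl | hx
  · simp
  · rw [Real.log_div hx hy]; ring

lemma kl_pt_nonneg (x y : ℝ) (hx : 0 ≤ x) (hy : 0 < y) :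
    0 ≤ x * Real.log x - x * Real.log y - x + y := by
  rcases eq_or_lt_of_le hx with rfl | hx'
  · simpa using hy.le
  · have h := Real.log_le_sub_one_of_pos (show (0:ℝ) < y / x by positivity)
    rw [Real.log_div hy.ne' hx'.ne'] at h
    have h2 := mul_le_mul_of_nonneg_left h hx
    have key : x * (y / x - 1) = y - x := by field_simp
    nlinarith [h2]

lemma kl_pt_le (x y : ℝ) (hx : 0 ≤ x) (hy : 0 < y) :
    x * Real.log x - x * Real.log y - x + y ≤ (x - y)^2 / y := by
  rcases eq_or_lt_of_le hx with rfl | hx'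
  · have : (0 - y)^2 / y = y := by field_simp; ring
    rw [this]; simp
  · have h := Real.log_le_sub_one_of_pos (show (0:ℝ) < x / y by positivity)
    rw [Real.log_div hx'.ne' hy.ne'] at h
    have h2 := mul_le_mul_of_nonneg_left h hx
    have key : x * (x / y - 1) - x + y = (x - y)^2 / y := by field_simp; ring
    nlinarith [h2]

lemma pt_A_bound (a b L s : ℝ) (ha : 0 ≤ a) (hb : 0 < b)
    (hL : 0 < L) (hLb : L ≤ |Real.log b|) (hs : 1 < s) (δ : ℝ) (hbδ : b < δ) :
    a * Real.log a - a * Real.log b - a + b ≤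
      (2*δ*b + 2*(a-b)^2) + (1 / L^(s-1)) * (a * |Real.log b|^s) + b := by
  have h1 : a * Real.log a ≤ a^2 := by
    rcases eq_or_lt_of_le ha with rfl | ha'
    · simp
    · nlinarith [Real.log_le_sub_one_of_pos ha']
  have h2 : - (a * Real.log b) ≤ a * |Real.log b| := by
    have := neg_abs_le (Real.log b)
    nlinarith
  have hT : |Real.log b| ≤ (1 / L^(s-1)) * |Real.log b|^s := by
    have hLpos : (0:ℝ) < L^(s-1) := Real.rpow_pos_of_pos hL _
    have hTpos : (0:ℝ) < |Real.log b| := lt_of_lt_of_le hL hLb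
    have hsplit : |Real.log b|^s = |Real.log b| * |Real.log b|^(s-1) := by
      rw [← Real.rpow_one_add' (by positivity) (by linarith)]
      ring_nf
    have hmono : L^(s-1) ≤ |Real.log b|^(s-1) :=
      Real.rpow_le_rpow hL.le hLb (by linarith)
    have key : |Real.log b| * L^(s-1) ≤ |Real.log b|^s := by
      rw [hsplit]
      exact mul_le_mul_of_nonneg_left hmono hTpos.le
    rw [one_div, inv_mul_eq_div, le_div_iff₀ hLpos]
    exact key
  have h3 : a * |Real.log b| ≤ (1 / L^(s-1)) * (a * |Real.log b|^s) := by
    have := mul_le_mul_of_nonneg_left hT ha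
    nlinarith [this]
  have h4 : a^2 ≤ 2*δ*b + 2*(a-b)^2 := by
    nlinarith [sq_nonneg (a - 2*b), mul_lt_mul_of_pos_right hbδ hb]
  nlinarith [h1, h2, h3, h4, ha, hb.le]

lemma density_lintegral {Ω : Type*} [MeasurableSpace Ω] {P : Measure Ω} [IsProbabilityMeasure P]
    {X : Ω → ℝ} {p : ℝ → ℝ} (h : IsDensityOf P X p) :
    ∫⁻ x, ENNReal.ofReal (p x) = 1 := by
  obtain ⟨hX, hp, hp0, hmap⟩ := h
  have h1 : (Measure.map X P) Set.univ = 1 := by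
    rw [Measure.map_apply hX MeasurableSet.univ]; simp
  rw [hmap, withDensity_apply _ MeasurableSet.univ, Measure.restrict_univ] at h1
  exact h1

lemma density_integrable {Ω : Type*} [MeasurableSpace Ω] {P : Measure Ω} [IsProbabilityMeasure P]
    {X : Ω → ℝ} {p : ℝ → ℝ} (h : IsDensityOf P X p) :
    Integrable p volume := by
  refine ⟨h.2.1.aestronglyMeasurable, ?_⟩
  rw [hasFiniteIntegral_iff_norm]
  have : ∀ x, ENNReal.ofReal ‖p x‖ = ENNReal.ofReal (p x) := by
    intro x; rw [Real.norm_eq_abs, abs_of_nonneg (h.2.2.1 x)]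
  simp_rw [this, density_lintegral h]
  exact ENNReal.one_lt_top

lemma density_integral {Ω : Type*} [MeasurableSpace Ω] {P : Measure Ω} [IsProbabilityMeasure P]
    {X : Ω → ℝ} {p : ℝ → ℝ} (h : IsDensityOf P X p) :
    ∫ x, p x = 1 := by
  rw [integral_eq_lintegral_of_nonneg_ae (Filter.Eventually.of_forall h.2.2.1)
    h.2.1.aestronglyMeasurable, density_lintegral h]
  simp

lemma density_lintegral_comp {Ω : Type*} [MeasurableSpace Ω] {P : Measure Ω}
    {X : Ω → ℝ} {p : ℝ → ℝ} (h : IsDensityOf P X p)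
    {φ : ℝ → ℝ≥0∞} (hφ : Measurable φ) :
    ∫⁻ ω, φ (X ω) ∂P = ∫⁻ x, ENNReal.ofReal (p x) * φ x := by
  rw [← lintegral_map hφ h.1, h.2.2.2,
    lintegral_withDensity_eq_lintegral_mul volume
      (show Measurable (fun x => ENNReal.ofReal (p x)) from ENNReal.measurable_ofReal.comp h.2.1) hφ]
  rfl

lemma sq_eLpNorm (f : ℝ → ℝ) :
    (eLpNorm f 2 volume)^2 = ∫⁻ x, ENNReal.ofReal ((f x)^2) := by
  rw [eLpNorm_eq_lintegral_rpow_enorm_toReal (two_ne_zero) ENNReal.ofNat_ne_top]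
  have h1 : ∀ x : ℝ, (‖f x‖ₑ) ^ ((2:ℝ≥0∞).toReal) = ENNReal.ofReal ((f x)^2) := by
    intro x
    have h2 : ((2:ℝ≥0∞).toReal) = ((2:ℕ):ℝ) := by norm_num
    rw [h2, ENNReal.rpow_natCast, pow_two, Real.enorm_eq_ofReal_abs,
      ← ENNReal.ofReal_mul (abs_nonneg _), abs_mul_abs_self, ← pow_two]
  simp_rw [h1]
  rw [← ENNReal.rpow_natCast, ← ENNReal.rpow_mul]
  norm_num

lemma meas_abslog_rpow (pY : ℝ → ℝ) (hpY : Measurable pY) (s : ℝ) :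
    Measurable (fun x => |Real.log (pY x)| ^ s) := by
  measurability

lemma kl_bound {Ω : Type*} [MeasurableSpace Ω] (P : Measure Ω) [IsProbabilityMeasure P]
    (pY : ℝ → ℝ) (hpY : Measurable pY) (hpos : ∀ y, 0 < pY y)
    (hpY1 : ∫⁻ x, ENNReal.ofReal (pY x) = 1) (hpYint : Integrable pY volume)
    (X : Ω → ℝ) (pn : ℝ → ℝ) (hXd : IsDensityOf P X pn)
    (s : ℝ) (hs : 1 < s) (C : ℝ) (hC : 0 ≤ C)
    (hint : Integrable (fun ω => |Real.log (pY (X ω))| ^ s) P)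
    (hmom : ∫ ω, |Real.log (pY (X ω))| ^ s ∂P ≤ C)
    (δ : ℝ) (hδ0 : 0 < δ) (hδ1 : δ < 1)
    (e : ℝ) (he0 : 0 ≤ e)
    (he : eLpNorm (fun x => pn x - pY x) 2 volume = ENNReal.ofReal e) :
    0 ≤ KLdiv pn pY ∧
      KLdiv pn pY ≤ 2*δ + 2*e^2 + C / (Real.log (1/δ))^(s-1)
        + (∫ x in {x : ℝ | pY x < δ}, pY x) + e^2/δ := by
  obtain ⟨hXm, hpnm, hpn0, hmap⟩ := hXd
  have hXd' : IsDensityOf P X pn := ⟨hXm, hpnm, hpn0, hmap⟩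
  set L := Real.log (1/δ) with hLdef
  have hL : 0 < L := Real.log_pos (by rw [one_div]; exact (one_lt_inv_iff₀).2 ⟨hδ0, hδ1⟩)
  set f := fun x => pn x - pY x with hfdef
  set g := fun x => pn x * Real.log (pn x) - pn x * Real.log (pY x) - pn x + pY x with hgdef
  have hgm : Measurable g :=
    (((hpnm.mul hpnm.log).sub (hpnm.mul hpY.log)).sub hpnm).add hpY
  have hfm : Measurable f := hpnm.sub hpY
  have hg0 : ∀ x, 0 ≤ g x := fun x => kl_pt_nonneg _ _ (hpn0 x) (hpos x)
  have E2 : ∫⁻ x, ENNReal.ofReal ((f x)^2) = ENNReal.ofReal (e^2) := by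
    rw [← sq_eLpNorm, he, ← ENNReal.ofReal_pow he0]
  set A := {x : ℝ | pY x < δ} with hAdef
  have hAm : MeasurableSet A := measurableSet_lt hpY measurable_const
  -- bound on Aᶜ
  have hcompl : ∫⁻ x in Aᶜ, ENNReal.ofReal (g x) ≤ ENNReal.ofReal (e^2/δ) := by
    have step1 : ∫⁻ x in Aᶜ, ENNReal.ofReal (g x) ≤
        ∫⁻ x in Aᶜ, ENNReal.ofReal (1/δ) * ENNReal.ofReal ((f x)^2) := by
      apply setLIntegral_mono
        (((hfm.pow_const 2).ennreal_ofReal).const_mul _)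
      intro x hx
      rw [← ENNReal.ofReal_mul (by positivity)]
      apply ENNReal.ofReal_le_ofReal
      have hxA : δ ≤ pY x := not_lt.1 hx
      calc g x ≤ (f x)^2 / pY x := kl_pt_le _ _ (hpn0 x) (hpos x)
        _ ≤ (f x)^2 / δ := div_le_div_of_nonneg_left (sq_nonneg _) hδ0 hxA
        _ = 1/δ * (f x)^2 := by ring
    calc ∫⁻ x in Aᶜ, ENNReal.ofReal (g x)
        ≤ ∫⁻ x in Aᶜ, ENNReal.ofReal (1/δ) * ENNReal.ofReal ((f x)^2) := step1
      _ = ENNReal.ofReal (1/δ) * ∫⁻ x in Aᶜ, ENNReal.ofReal ((f x)^2) :=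
          lintegral_const_mul _ ((hfm.pow_const 2).ennreal_ofReal)
      _ ≤ ENNReal.ofReal (1/δ) * ∫⁻ x, ENNReal.ofReal ((f x)^2) := by
          gcongr
          exact Measure.restrict_le_self
      _ = ENNReal.ofReal (1/δ) * ENNReal.ofReal (e^2) := by rw [E2]
      _ = ENNReal.ofReal (e^2/δ) := by
          rw [← ENNReal.ofReal_mul (by positivity), one_div_mul_eq_div]
  -- bound on A
  have hLb : ∀ x ∈ A, L ≤ |Real.log (pY x)| := by
    intro x hx
    have h1 : Real.log (pY x) < Real.log δ := Real.log_lt_log (hpos x) hx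
    have h2 : Real.log δ < 0 := Real.log_neg hδ0 hδ1
    have h3 : L = - Real.log δ := by rw [hLdef, one_div, Real.log_inv]
    rw [abs_of_neg (lt_trans h1 h2), h3]
    linarith
  have hmomE : ∫⁻ ω, ENNReal.ofReal (|Real.log (pY (X ω))| ^ s) ∂P ≤ ENNReal.ofReal C := by
    rw [← ofReal_integral_eq_lintegral_ofReal hint
      (Filter.Eventually.of_forall (fun ω => Real.rpow_nonneg (abs_nonneg _) s))]
    exact ENNReal.ofReal_le_ofReal hmom
  have hφm : Measurable (fun x : ℝ => ENNReal.ofReal (|Real.log (pY x)| ^ s)) :=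
    (meas_abslog_rpow pY hpY s).ennreal_ofReal
  have hchange : ∫⁻ x, ENNReal.ofReal (pn x) * ENNReal.ofReal (|Real.log (pY x)| ^ s)
      ≤ ENNReal.ofReal C := by
    rw [← density_lintegral_comp hXd' hφm]
    exact hmomE
  have hA1 : ∫⁻ x in A, ENNReal.ofReal (2*δ*pY x + 2*(f x)^2) ≤ ENNReal.ofReal (2*δ + 2*e^2) := by
    have hpt : ∀ x : ℝ, ENNReal.ofReal (2*δ*pY x + 2*(f x)^2) =
        ENNReal.ofReal (2*δ) * ENNReal.ofReal (pY x) + ENNReal.ofReal 2 * ENNReal.ofReal ((f x)^2) := by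
      intro x
      rw [ENNReal.ofReal_add (mul_nonneg (by positivity) (hpos x).le) (by positivity),
        ENNReal.ofReal_mul (show (0:ℝ) ≤ 2 by norm_num),
        ENNReal.ofReal_mul (show (0:ℝ) ≤ 2*δ by positivity)]
    simp_rw [hpt]
    rw [lintegral_add_left ((hpY.ennreal_ofReal).const_mul _),
      lintegral_const_mul _ (hpY.ennreal_ofReal),
      lintegral_const_mul _ ((hfm.pow_const 2).ennreal_ofReal)]
    calc ENNReal.ofReal (2*δ) * (∫⁻ x in A, ENNReal.ofReal (pY x))
          + ENNReal.ofReal 2 * (∫⁻ x in A, ENNReal.ofReal ((f x)^2))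
        ≤ ENNReal.ofReal (2*δ) * (∫⁻ x, ENNReal.ofReal (pY x))
          + ENNReal.ofReal 2 * (∫⁻ x, ENNReal.ofReal ((f x)^2)) := by
          gcongr <;> exact Measure.restrict_le_self
      _ = ENNReal.ofReal (2*δ) * 1 + ENNReal.ofReal 2 * ENNReal.ofReal (e^2) := by rw [hpY1, E2]
      _ = ENNReal.ofReal (2*δ + 2*e^2) := by
          rw [mul_one, ← ENNReal.ofReal_mul (by norm_num),
            ← ENNReal.ofReal_add (by positivity) (by positivity)]
  have hA2 : ∫⁻ x in A, ENNReal.ofReal ((1/L^(s-1)) * (pn x * |Real.log (pY x)|^s))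
      ≤ ENNReal.ofReal (C / L^(s-1)) := by
    have hcnn : (0:ℝ) ≤ 1/L^(s-1) := by positivity
    have hpt : ∀ x : ℝ, ENNReal.ofReal ((1/L^(s-1)) * (pn x * |Real.log (pY x)|^s)) =
        ENNReal.ofReal (1/L^(s-1)) * (ENNReal.ofReal (pn x) * ENNReal.ofReal (|Real.log (pY x)|^s)) := by
      intro x
      rw [ENNReal.ofReal_mul hcnn, ENNReal.ofReal_mul (hpn0 x)]
    simp_rw [hpt]
    rw [lintegral_const_mul (f := fun x => ENNReal.ofReal (pn x) * ENNReal.ofReal (|Real.log (pY x)|^s)) _ ((hpnm.ennreal_ofReal).mul hφm)]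
    calc ENNReal.ofReal (1/L^(s-1)) * ∫⁻ x in A, ENNReal.ofReal (pn x) * ENNReal.ofReal (|Real.log (pY x)|^s)
        ≤ ENNReal.ofReal (1/L^(s-1)) * ∫⁻ x, ENNReal.ofReal (pn x) * ENNReal.ofReal (|Real.log (pY x)|^s) := by
          gcongr
          exact Measure.restrict_le_self
      _ ≤ ENNReal.ofReal (1/L^(s-1)) * ENNReal.ofReal C := by gcongr
      _ = ENNReal.ofReal (C / L^(s-1)) := by
          rw [← ENNReal.ofReal_mul hcnn, one_div_mul_eq_div]
  have hA3 : ∫⁻ x in A, ENNReal.ofReal (pY x) = ENNReal.ofReal (∫ x in A, pY x) :=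
    (ofReal_integral_eq_lintegral_ofReal hpYint.restrict
      (Filter.Eventually.of_forall (fun x => (hpos x).le))).symm
  have hm1 : Measurable (fun x : ℝ => ENNReal.ofReal (2*δ*pY x + 2*(f x)^2)) :=
    (((hpY.const_mul _).add ((hfm.pow_const 2).const_mul _))).ennreal_ofReal
  have hm2 : Measurable (fun x : ℝ => ENNReal.ofReal ((1/L^(s-1)) * (pn x * |Real.log (pY x)|^s))) :=
    ((hpnm.mul (meas_abslog_rpow pY hpY s)).const_mul _).ennreal_ofReal
  have hm3 : Measurable (fun x : ℝ => ENNReal.ofReal (pY x)) :=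
    hpY.ennreal_ofReal
  have hAfull : ∫⁻ x in A, ENNReal.ofReal (g x) ≤
      ENNReal.ofReal (2*δ + 2*e^2) + ENNReal.ofReal (C / L^(s-1))
        + ENNReal.ofReal (∫ x in A, pY x) := by
    calc ∫⁻ x in A, ENNReal.ofReal (g x)
        ≤ ∫⁻ x in A, (ENNReal.ofReal (2*δ*pY x + 2*(f x)^2)
            + ENNReal.ofReal ((1/L^(s-1)) * (pn x * |Real.log (pY x)|^s))
            + ENNReal.ofReal (pY x)) := by
          apply setLIntegral_mono ((hm1.add hm2).add hm3)
          intro x hx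
          have h := pt_A_bound (pn x) (pY x) L s (hpn0 x) (hpos x) hL (hLb x hx) hs δ hx
          calc ENNReal.ofReal (g x)
              ≤ ENNReal.ofReal ((2*δ*pY x + 2*(f x)^2)
                  + (1/L^(s-1)) * (pn x * |Real.log (pY x)|^s) + pY x) :=
                ENNReal.ofReal_le_ofReal h
            _ ≤ _ := le_trans ENNReal.ofReal_add_le
                (add_le_add_left ENNReal.ofReal_add_le _)
      _ = (∫⁻ x in A, ENNReal.ofReal (2*δ*pY x + 2*(f x)^2))
            + (∫⁻ x in A, ENNReal.ofReal ((1/L^(s-1)) * (pn x * |Real.log (pY x)|^s)))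
            + ∫⁻ x in A, ENNReal.ofReal (pY x) := by
          rw [lintegral_add_right _ hm3, lintegral_add_right _ hm2]
      _ ≤ _ := add_le_add (add_le_add hA1 hA2) (le_of_eq hA3)
  have hB3 : 0 ≤ ∫ x in A, pY x := setIntegral_nonneg hAm (fun x _ => (hpos x).le)
  have hB2 : 0 ≤ C / L^(s-1) := by positivity
  have hG : ∫⁻ x, ENNReal.ofReal (g x) ≤
      ENNReal.ofReal (2*δ + 2*e^2 + C / L^(s-1) + (∫ x in A, pY x) + e^2/δ) := by
    rw [← lintegral_add_compl (fun x => ENNReal.ofReal (g x)) hAm]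
    calc (∫⁻ x in A, ENNReal.ofReal (g x)) + ∫⁻ x in Aᶜ, ENNReal.ofReal (g x)
        ≤ (ENNReal.ofReal (2*δ + 2*e^2) + ENNReal.ofReal (C / L^(s-1))
            + ENNReal.ofReal (∫ x in A, pY x)) + ENNReal.ofReal (e^2/δ) :=
          add_le_add hAfull hcompl
      _ = ENNReal.ofReal (2*δ + 2*e^2 + C / L^(s-1) + (∫ x in A, pY x) + e^2/δ) := by
          rw [← ENNReal.ofReal_add (by positivity) hB2,
            ← ENNReal.ofReal_add (by positivity) hB3,
            ← ENNReal.ofReal_add (by positivity) (by positivity)]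
  have hgint : Integrable g volume := by
    refine ⟨hgm.aestronglyMeasurable, ?_⟩
    rw [hasFiniteIntegral_iff_norm]
    have hnorm : ∀ x, ENNReal.ofReal ‖g x‖ = ENNReal.ofReal (g x) := fun x => by
      rw [Real.norm_eq_abs, abs_of_nonneg (hg0 x)]
    simp_rw [hnorm]
    exact lt_of_le_of_lt hG ENNReal.ofReal_lt_top
  have hfint : Integrable f volume := (density_integrable hXd').sub hpYint
  have hpYi : ∫ x, pY x = 1 := by
    rw [integral_eq_lintegral_of_nonneg_ae
      (Filter.Eventually.of_forall (fun x => (hpos x).le)) hpY.aestronglyMeasurable, hpY1]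
    simp
  have hf0 : ∫ x, f x = 0 := by
    have : ∫ x, f x = (∫ x, pn x) - ∫ x, pY x :=
      integral_sub (density_integrable hXd') hpYint
    rw [this, density_integral hXd', hpYi, sub_self]
  have hKL : KLdiv pn pY = ∫ x, g x := by
    have hfun : ∀ x, pn x * Real.log (pn x / pY x) = g x + f x :=
      fun x => kl_pt_eq _ _ (hpos x).ne'
    rw [KLdiv]
    simp_rw [hfun]
    rw [integral_add hgint hfint, hf0, add_zero]
  have hgeq : ∫ x, g x = (∫⁻ x, ENNReal.ofReal (g x)).toReal := by
    rw [integral_eq_lintegral_of_nonneg_ae (Filter.Eventually.of_forall hg0)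
      hgm.aestronglyMeasurable]
  constructor
  · rw [hKL]; exact integral_nonneg hg0
  · rw [hKL, hgeq]
    exact ENNReal.toReal_le_of_le_ofReal (by positivity) hG

lemma kl_tail_tendsto (pY : ℝ → ℝ) (hpY : Measurable pY) (hpos : ∀ y, 0 < pY y)
    (hpYint : Integrable pY volume) (C s : ℝ) (hs : 1 < s) :
    Tendsto (fun k : ℕ => 2*(1/((k:ℝ)+2)) + C/(Real.log (1/(1/((k:ℝ)+2))))^(s-1)
      + ∫ x in {x : ℝ | pY x < 1/((k:ℝ)+2)}, pY x) atTop (nhds 0) := by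
  have hk : Tendsto (fun k : ℕ => (k:ℝ)+2) atTop atTop :=
    tendsto_atTop_add_const_right atTop 2 tendsto_natCast_atTop_atTop
  have h1 : Tendsto (fun k : ℕ => 1/((k:ℝ)+2)) atTop (nhds 0) := by
    exact hk.inv_tendsto_atTop.congr (fun k => by simp [one_div])
  have t1 : Tendsto (fun k : ℕ => 2*(1/((k:ℝ)+2))) atTop (nhds 0) := by
    simpa using h1.const_mul 2
  have t2 : Tendsto (fun k : ℕ => C/(Real.log (1/(1/((k:ℝ)+2))))^(s-1)) atTop (nhds 0) := by
    have hlog : Tendsto (fun k : ℕ => (Real.log (1/(1/((k:ℝ)+2))))^(s-1)) atTop atTop := by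
      have : Tendsto (fun k : ℕ => Real.log ((k:ℝ)+2)) atTop atTop :=
        Real.tendsto_log_atTop.comp hk
      refine ((tendsto_rpow_atTop (by linarith : (0:ℝ) < s-1)).comp this).congr ?_
      intro k
      simp [one_div_one_div]
    exact Tendsto.div_atTop tendsto_const_nhds hlog
  have t3 : Tendsto (fun k : ℕ => ∫ x in {x : ℝ | pY x < 1/((k:ℝ)+2)}, pY x) atTop (nhds 0) := by
    have hAm : ∀ k : ℕ, MeasurableSet {x : ℝ | pY x < 1/((k:ℝ)+2)} :=
      fun k => measurableSet_lt hpY measurable_const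
    have key : Tendsto (fun k : ℕ => ∫ x, ({x : ℝ | pY x < 1/((k:ℝ)+2)}).indicator pY x)
        atTop (nhds (∫ _ : ℝ, (0:ℝ))) := by
      apply tendsto_integral_of_dominated_convergence pY
      · exact fun k => (hpY.indicator (hAm k)).aestronglyMeasurable
      · exact hpYint
      · intro k
        refine Filter.Eventually.of_forall (fun x => ?_)
        rw [Real.norm_eq_abs]
        rcases Set.indicator_eq_zero_or_self {x : ℝ | pY x < 1/((k:ℝ)+2)} pY x with h | h
        · rw [h]; simp [(hpos x).le]
        · rw [h, abs_of_nonneg (hpos x).le]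
      · refine Filter.Eventually.of_forall (fun x => ?_)
        have : ∀ᶠ k : ℕ in atTop, ({x : ℝ | pY x < 1/((k:ℝ)+2)}).indicator pY x = 0 := by
          have := h1.eventually_lt_const (hpos x)
          filter_upwards [this] with k hkx
          apply Set.indicator_of_notMem
          simp only [Set.mem_setOf_eq, not_lt]
          linarith
        exact Tendsto.congr' (this.mono fun k hk => hk.symm) tendsto_const_nhds
    rw [integral_zero] at key
    refine key.congr (fun k => ?_)
    exact integral_indicator (hAm k)
  have := (t1.add t2).add t3
  simpa using this

/-- **Corollary 2.1.** If `Y` has a continuous, everywhere positive density `p_Y ≤ D`,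
`X_n` have densities `p_n` with `‖p_n − p_Y‖₂ → 0`, and for some `s > 1` the moments
`E|ln p_Y(X_n)|^s` are uniformly bounded, then `KL(X_n‖Y) → 0`. -/
theorem kl_tendsto_zero_of_L2_tendsto_zero
    {Ω : Type*} [MeasurableSpace Ω] (P : Measure Ω) [IsProbabilityMeasure P]
    (Y : Ω → ℝ) (pY : ℝ → ℝ) (hY : IsDensityOf P Y pY) (hcont : Continuous pY)
    (D : ℝ) (hpos : ∀ y, 0 < pY y) (hbd : ∀ y, pY y ≤ D)
    (X : ℕ → Ω → ℝ) (p : ℕ → ℝ → ℝ) (hX : ∀ n, IsDensityOf P (X n) (p n))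
    (hL2 : Tendsto (fun n => eLpNorm (fun x => p n x - pY x) 2 volume) atTop (nhds 0))
    (s : ℝ) (hs : 1 < s) (C : ℝ)
    (hint : ∀ n, Integrable (fun ω => |Real.log (pY (X n ω))| ^ s) P)
    (hmom : ∀ n, ∫ ω, |Real.log (pY (X n ω))| ^ s ∂P ≤ C) :
    Tendsto (fun n => KLdiv (p n) pY) atTop (nhds 0) := by
  have hpYm : Measurable pY := hY.2.1
  have hpY1 := density_lintegral hY
  have hpYint := density_integrable hY
  have hC : 0 ≤ C :=
    le_trans (integral_nonneg (fun ω => Real.rpow_nonneg (abs_nonneg _) s)) (hmom 0)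
  rw [Metric.tendsto_atTop]
  intro ε hε
  have htail := kl_tail_tendsto pY hpYm hpos hpYint C s hs
  obtain ⟨k, hk⟩ := (htail.eventually_lt_const (by linarith : (0:ℝ) < ε/2)).exists
  set δ : ℝ := 1/((k:ℝ)+2) with hδdef
  have hδ0 : 0 < δ := by positivity
  have hδ1 : δ < 1 := by
    rw [hδdef, div_lt_one (by positivity)]
    have : (0:ℝ) ≤ (k:ℝ) := Nat.cast_nonneg k
    linarith
  set t : ℝ := Real.sqrt (ε/2 / (2 + 1/δ)) with htdef
  have htpos : 0 < t := Real.sqrt_pos.2 (by positivity)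
  have hevn : ∀ᶠ n in atTop, eLpNorm (fun x => p n x - pY x) 2 volume < ENNReal.ofReal t :=
    hL2.eventually_lt_const (ENNReal.ofReal_pos.2 htpos)
  obtain ⟨N, hN⟩ := eventually_atTop.1 hevn
  refine ⟨N, fun n hn => ?_⟩
  have hEn := hN n hn
  have hne : eLpNorm (fun x => p n x - pY x) 2 volume ≠ ⊤ :=
    ne_top_of_lt (lt_trans hEn ENNReal.ofReal_lt_top)
  set e : ℝ := (eLpNorm (fun x => p n x - pY x) 2 volume).toReal with hedef
  have he : eLpNorm (fun x => p n x - pY x) 2 volume = ENNReal.ofReal e :=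
    (ENNReal.ofReal_toReal hne).symm
  have he0 : 0 ≤ e := ENNReal.toReal_nonneg
  have helt : e < t := by
    have h2 := ENNReal.toReal_strict_mono ENNReal.ofReal_ne_top hEn
    rwa [ENNReal.toReal_ofReal htpos.le] at h2
  obtain ⟨hKL0, hKLle⟩ := kl_bound P pY hpYm hpos hpY1 hpYint (X n) (p n) (hX n)
    s hs C hC (hint n) (hmom n) δ hδ0 hδ1 e he0 he
  rw [Real.dist_0_eq_abs, abs_of_nonneg hKL0]
  have h2 : 2*e^2 + e^2/δ < ε/2 := by
    have he2 : e^2 < t^2 := by nlinarith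
    have ht2 : t^2 = ε/2 / (2 + 1/δ) := Real.sq_sqrt (by positivity)
    have hpos2 : (0:ℝ) < 2 + 1/δ := by positivity
    calc 2*e^2 + e^2/δ = e^2 * (2 + 1/δ) := by
          rw [div_eq_mul_inv, one_div]; ring
      _ < t^2 * (2+1/δ) := mul_lt_mul_of_pos_right he2 hpos2
      _ = ε/2 := by rw [ht2]; field_simp
  linarith [hKLle, h2, hk]
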